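/- If C is a hereditary class with χ-bounding function ω^k (k ≥ 1), then the substitution closure C_s is polynomially χ-bounded with function χ ≤ ω^{2k+3}. -/

import Mathlib

universe u

/-- A finite rooted tree on the node set `α`, given by its root and parent
function (the root is its own parent, and iterating the parent function
reaches the root from every node). -/
structure ParentTree (α : Type u) where
  root : α
  parent : α → α
  parent_root : parent root = root
  reaches_root : ∀ x, ∃ m : ℕ, parent^[m] x = root

namespace ParentTree

variable {α : Type u} (T : ParentTree α)

/-- `y` is a child of `x`. -/
def IsChild (y x : α) : Prop := T.parent y = x ∧ y ≠ x

/-- A leaf is a node with no children. -/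
def IsLeaf (x : α) : Prop := ∀ y, ¬ T.IsChild y x

/-- `x` is a (weak) ancestor of `y`. -/
def Ancestor (x y : α) : Prop := ∃ m : ℕ, T.parent^[m] y = x

def StrictAncestor (x y : α) : Prop := T.Ancestor x y ∧ x ≠ y

/-- `z` is the closest common ancestor of `x` and `y`. -/
def IsLCA (z x y : α) : Prop :=
  T.Ancestor z x ∧ T.Ancestor z y ∧
  ∀ w, T.Ancestor w x → T.Ancestor w y → T.Ancestor w z

/-- `y` is a grandchild of `x`. -/
def IsGrandchild (y x : α) : Prop := ∃ z, T.IsChild y z ∧ T.IsChild z x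

end ParentTree

/-- `R` is the realization `R(T,g)`: vertices are the leaves of `T`, two
leaves adjacent iff the children of their closest common ancestor `z` above
them are adjacent in `g(z)`. -/
def IsRealization {α : Type u} (T : ParentTree α) (g : α → SimpleGraph α)
    (R : SimpleGraph {v : α // T.IsLeaf v}) : Prop :=
  ∀ u v : {v : α // T.IsLeaf v}, R.Adj u v ↔
    ∃ z x' y', T.IsLCA z u v ∧ T.IsChild x' z ∧ T.IsChild y' z ∧
      T.Ancestor x' u ∧ T.Ancestor y' v ∧ (g z).Adj x' y'

namespace ParentTree

variable {α : Type u} {T : ParentTree α}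


lemma iterate_root (n : ℕ) : T.parent^[n] T.root = T.root :=
  Function.iterate_fixed T.parent_root n

lemma anc_refl (x : α) : T.Ancestor x x := ⟨0, rfl⟩

lemma anc_trans {x y z : α} (h1 : T.Ancestor x y) (h2 : T.Ancestor y z) :
    T.Ancestor x z := by
  obtain ⟨m, hm⟩ := h1; obtain ⟨n, hn⟩ := h2
  exact ⟨m + n, by rw [Function.iterate_add_apply, hn, hm]⟩

lemma anc_root (x : α) : T.Ancestor T.root x := T.reaches_root x

lemma anc_of_root {x : α} (h : T.Ancestor x T.root) : x = T.root := by
  obtain ⟨m, hm⟩ := h; rw [iterate_root] at hm; exact hm.symm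

lemma parent_fix_root {t : α} (h : T.parent t = t) : t = T.root := by
  obtain ⟨m, hm⟩ := T.reaches_root t
  rw [Function.iterate_fixed h] at hm; exact hm

lemma anc_antisymm {x y : α} (h1 : T.Ancestor x y) (h2 : T.Ancestor y x) : x = y := by
  obtain ⟨a, ha⟩ := h1; obtain ⟨b, hb⟩ := h2
  rcases Nat.eq_zero_or_pos (b + a) with h | h
  · have hb0 : b = 0 := by omega
    rw [hb0] at hb; exact hb ▸ ha ▸ rfl
  · -- y is periodic with period b+a
    have hper : T.parent^[b + a] y = y := by
      rw [Function.iterate_add_apply, ha, hb]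
    have hall : ∀ i, T.parent^[i * (b + a)] y = y := by
      intro i; induction i with
      | zero => simp
      | succ n ih => rw [Nat.succ_mul, Function.iterate_add_apply, hper, ih]
    obtain ⟨d, hd⟩ := T.reaches_root y
    have hyroot : y = T.root := by
      have h1 : d ≤ d * (b + a) := Nat.le_mul_of_pos_right d h
      have : T.parent^[d * (b + a)] y = T.root := by
        have : d * (b+a) = (d * (b+a) - d) + d := by omega
        rw [this, Function.iterate_add_apply, hd, iterate_root]
      rw [hall d] at this; exact this
    subst hyroot
    rw [iterate_root] at ha; rw [← ha]

lemma anc_total {x y z : α} (h1 : T.Ancestor x z) (h2 : T.Ancestor y z) :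
    T.Ancestor x y ∨ T.Ancestor y x := by
  obtain ⟨a, ha⟩ := h1; obtain ⟨b, hb⟩ := h2
  rcases le_total a b with h | h
  · right
    exact ⟨b - a, by rw [← ha, ← Function.iterate_add_apply, Nat.sub_add_cancel h, hb]⟩
  · left
    exact ⟨a - b, by rw [← hb, ← Function.iterate_add_apply, Nat.sub_add_cancel h, ha]⟩

lemma anc_parent {x y : α} (h : T.Ancestor x y) (hne : x ≠ y) :
    T.Ancestor x (T.parent y) := by
  obtain ⟨m, hm⟩ := h
  match m, hm with
  | 0, hm => exact absurd hm.symm (by simpa using hne)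
  | n+1, hm => exact ⟨n, by rw [← hm, Function.iterate_succ_apply]⟩

lemma parent_anc (y : α) : T.Ancestor (T.parent y) y := ⟨1, rfl⟩

lemma child_anc {a z : α} (h : T.IsChild a z) : T.Ancestor z a := ⟨1, by simp [h.1]⟩

lemma anc_child_eq {a b z : α} (ha : T.IsChild a z) (hb : T.IsChild b z)
    (h : T.Ancestor a b) : a = b := by
  by_contra hne
  have h2 : T.Ancestor a (T.parent b) := anc_parent h hne
  rw [hb.1] at h2
  have h3 : T.Ancestor z a := child_anc ha
  have := anc_antisymm h2 h3
  exact ha.2 this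

lemma subtree_disj {a b z x : α} (ha : T.IsChild a z) (hb : T.IsChild b z)
    (hne : a ≠ b) (h1 : T.Ancestor a x) (h2 : T.Ancestor b x) : False := by
  rcases anc_total h1 h2 with h | h
  · exact hne (anc_child_eq ha hb h)
  · exact hne (anc_child_eq hb ha h).symm
  
lemma anc_of_leaf {v p : α} (hv : T.IsLeaf v) (h : T.Ancestor v p) : p = v := by
  obtain ⟨m, hm⟩ := h
  induction m with
  | zero => exact hm
  | succ n ih =>
    rw [Function.iterate_succ_apply'] at hm
    by_cases hx : T.parent^[n] p = v
    · exact ih hx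
    · exact absurd ⟨hm, hx⟩ (hv _)

lemma lca_of_children {a b z u v : α} (ha : T.IsChild a z) (hb : T.IsChild b z)
    (hne : a ≠ b) (hu : T.Ancestor a u) (hv : T.Ancestor b v) : T.IsLCA z u v := by
  refine ⟨anc_trans (child_anc ha) hu, anc_trans (child_anc hb) hv, ?_⟩
  intro w hwu hwv
  rcases anc_total hwu (anc_trans (child_anc ha) hu) with h | h
  · exact h
  · -- z anc of w
    rcases anc_total hwu hu with h2 | h2
    · -- w anc of a
      by_cases hwa : w = a
      · subst hwa; exact (subtree_disj ha hb hne hwv hv).elim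
      · have := anc_parent h2 hwa
        rw [ha.1] at this; exact this
    · -- a anc of w
      exact absurd (anc_trans h2 hwv) (fun hh => subtree_disj ha hb hne hh hv)

end ParentTree

open ParentTree Finset
open scoped Classical
set_option linter.unusedSectionVars false

def LL (W j : ℕ) : ℕ := min (2^(j+1) - 1) (W/2)
def MM (k W j : ℕ) : ℕ := (LL W j)^(2*k+2) * W
def KK (k W j : ℕ) : ℕ := (W / 2^j)^k
def off (k W j : ℕ) : ℕ := ∑ i ∈ range j, KK k W i * MM k W i

lemma MM_pos {k W j : ℕ} (hW : 2 ≤ W) : 0 < MM k W j := by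
  have h1 : 0 < LL W j := by
    simp only [LL, lt_min_iff]
    constructor
    · have : 2 ≤ 2^(j+1) := by
        calc 2 = 2^1 := by norm_num
        _ ≤ 2^(j+1) := Nat.pow_le_pow_right (by omega) (by omega)
      omega
    · exact Nat.div_pos hW (by norm_num)
  exact Nat.mul_pos (pow_pos h1 _) (by omega)

lemma digit_inj {M a b r1 r2 : ℕ} (h1 : r1 < M) (h2 : r2 < M) (hne : a ≠ b ∨ r1 ≠ r2) :
    a * M + r1 ≠ b * M + r2 := by
  intro h
  have hM : 0 < M := by omega
  have e1 : (r1 + a * M) / M = a := by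
    rw [Nat.add_mul_div_right _ _ hM, Nat.div_eq_of_lt h1, Nat.zero_add]
  have e2 : (r2 + b * M) / M = b := by
    rw [Nat.add_mul_div_right _ _ hM, Nat.div_eq_of_lt h2, Nat.zero_add]
  have e3 : (r1 + a * M) % M = r1 := by
    rw [Nat.add_mul_mod_self_right, Nat.mod_eq_of_lt h1]
  have e4 : (r2 + b * M) % M = r2 := by
    rw [Nat.add_mul_mod_self_right, Nat.mod_eq_of_lt h2]
  have h' : r1 + a * M = r2 + b * M := by omega
  rcases hne with hne | hne
  · exact hne (by rw [← e1, ← e2, h'])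
  · exact hne (by rw [← e3, ← e4, h'])

lemma sum_two_pow (n : ℕ) : ∑ i ∈ range n, 2^(i+1) ≤ 2^(n+1) := by
  induction n with
  | zero => simp
  | succ n ih =>
    rw [Finset.sum_range_succ]
    have : 2^(n+1+1) = 2^(n+1) + 2^(n+1) := by ring
    omega

lemma term_le {k W : ℕ} (i : ℕ) :
    KK k W i * MM k W i ≤ ((2*W)^k * ((W/2)^(k+1) * W)) * 2^(i+1) := by
  have hLL1 : LL W i ≤ 2^(i+1) := le_trans (min_le_left _ _) (Nat.sub_le _ _)
  have hLL2 : LL W i ≤ W/2 := min_le_right _ _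
  have hsplit : (LL W i)^(2*k+2) ≤ (2^(i+1))^k * ((W/2)^(k+1) * 2^(i+1)) := by
    have : (LL W i)^(2*k+2) = (LL W i)^k * ((LL W i)^(k+1) * (LL W i)^1) := by
      rw [← pow_add, ← pow_add]; ring_nf
    rw [this]
    exact Nat.mul_le_mul (Nat.pow_le_pow_left hLL1 _)
      (Nat.mul_le_mul (Nat.pow_le_pow_left hLL2 _) (by simpa using hLL1))
  have hdiv : (W / 2^i) * 2^(i+1) ≤ 2*W := by
    have := Nat.div_mul_le_self W (2^i)
    have h2 : (W / 2^i) * 2^(i+1) = (W / 2^i) * 2^i * 2 := by ring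
    omega
  calc KK k W i * MM k W i = (W / 2^i)^k * ((LL W i)^(2*k+2) * W) := rfl
    _ ≤ (W / 2^i)^k * (((2^(i+1))^k * ((W/2)^(k+1) * 2^(i+1))) * W) := by
        exact Nat.mul_le_mul_left _ (Nat.mul_le_mul_right _ hsplit)
    _ = ((W / 2^i) * 2^(i+1))^k * ((W/2)^(k+1) * W) * 2^(i+1) := by
        rw [mul_pow]; ring
    _ ≤ (2*W)^k * ((W/2)^(k+1) * W) * 2^(i+1) := by
        exact Nat.mul_le_mul_right _ (Nat.mul_le_mul_right _ (Nat.pow_le_pow_left hdiv _))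
    _ = ((2*W)^k * ((W/2)^(k+1) * W)) * 2^(i+1) := by ring

lemma sum_KM_le {k W j : ℕ} (hj : 2^j ≤ W/2) :
    ∑ i ∈ range (j+1), KK k W i * MM k W i ≤ W^(2*k+3) := by
  have h1 : ∑ i ∈ range (j+1), KK k W i * MM k W i ≤
      ((2*W)^k * ((W/2)^(k+1) * W)) * 2^(j+2) := by
    calc ∑ i ∈ range (j+1), KK k W i * MM k W i
        ≤ ∑ i ∈ range (j+1), ((2*W)^k * ((W/2)^(k+1) * W)) * 2^(i+1) :=
          Finset.sum_le_sum (fun i _ => term_le i)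
      _ = ((2*W)^k * ((W/2)^(k+1) * W)) * ∑ i ∈ range (j+1), 2^(i+1) := by
          rw [Finset.mul_sum]
      _ ≤ _ := Nat.mul_le_mul_left _ (sum_two_pow (j+1))
  have h2 : 2^(j+2) ≤ 4 * (W/2) := by
    have : 2^(j+2) = 4 * 2^j := by ring
    omega
  have h3 : ((2*W)^k * ((W/2)^(k+1) * W)) * 2^(j+2) ≤ W^(2*k+3) := by
    calc ((2*W)^k * ((W/2)^(k+1) * W)) * 2^(j+2)
        ≤ ((2*W)^k * ((W/2)^(k+1) * W)) * (4 * (W/2)) :=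
          Nat.mul_le_mul_left _ h2
      _ = (2*(W/2))^(k+2) * (W^k * W) := by
          rw [mul_pow, mul_pow]; ring
      _ ≤ W^(k+2) * (W^k * W) := by
          have : 2*(W/2) ≤ W := by omega
          exact Nat.mul_le_mul_right _ (Nat.pow_le_pow_left this _)
      _ = W^(2*k+3) := by rw [← pow_succ, ← pow_add]; ring_nf
  exact le_trans h1 h3

lemma off_succ (k W j : ℕ) : off k W (j+1) = off k W j + KK k W j * MM k W j :=
  Finset.sum_range_succ _ _

lemma off_mono {k W : ℕ} {j j' : ℕ} (h : j ≤ j') : off k W j ≤ off k W j' :=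
  Finset.sum_le_sum_of_subset (Finset.range_subset_range.2 h)

lemma off_lt_le {k W : ℕ} {j j' : ℕ} (h : j < j') :
    off k W j + KK k W j * MM k W j ≤ off k W j' := by
  rw [← off_succ]; exact off_mono h

lemma off_block_le {k W j : ℕ} (hj : 2^j ≤ W/2) :
    off k W j + KK k W j * MM k W j ≤ W^(2*k+3) := by
  rw [← off_succ]
  calc off k W (j+1) ≤ ∑ i ∈ range (j+1), KK k W i * MM k W i := le_refl _
    _ ≤ W^(2*k+3) := sum_KM_le hj


section Main
variable {α : Type u} [Fintype α] (T : ParentTree α) (g : α → SimpleGraph α)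
  (R : SimpleGraph {v : α // T.IsLeaf v})

/-- depth of a node: distance to the root. -/
noncomputable def ParentTree.depth (t : α) : ℕ := Nat.find (T.reaches_root t)

lemma iterate_depth (t : α) : T.parent^[T.depth t] t = T.root := Nat.find_spec (T.reaches_root t)

lemma depth_eq_zero {t : α} (h : T.depth t = 0) : t = T.root := by
  have := iterate_depth T t; rw [h] at this; exact this

lemma depth_parent {t : α} (h : t ≠ T.root) : T.depth t = T.depth (T.parent t) + 1 := by
  have h1 : T.parent^[T.depth (T.parent t) + 1] t = T.root := by
    rw [Function.iterate_succ_apply]; exact iterate_depth T _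
  have h2 : T.depth t ≠ 0 := fun h0 => h (depth_eq_zero T h0)
  have h3 : T.parent^[(T.depth t - 1) + 1] t = T.root := by
    have he : T.depth t - 1 + 1 = T.depth t := by omega
    rw [he]; exact iterate_depth T t
  rw [Function.iterate_succ_apply] at h3
  have l1 : T.depth t ≤ T.depth (T.parent t) + 1 := Nat.find_le h1
  have l2 : T.depth (T.parent t) ≤ T.depth t - 1 := Nat.find_le h3
  omega

lemma child_ne_root {a z : α} (h : T.IsChild a z) : a ≠ T.root := by
  intro hr; subst hr; exact h.2 (T.parent_root.symm.trans h.1)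

/-- the maximum size of a clique of `R` contained in `S` and in the subtree of `t`. -/
noncomputable def Om (S : Finset {v : α // T.IsLeaf v}) (t : α) : ℕ :=
  (S.powerset.filter (fun (s : Finset {v : α // T.IsLeaf v}) => R.IsClique (s : Set {v : α // T.IsLeaf v})
    ∧ ∀ p ∈ s, T.Ancestor t p.1)).sup Finset.card

variable {T g R}

lemma le_Om {S s : Finset {v : α // T.IsLeaf v}} {t : α} (hsub : s ⊆ S)
    (hcl : R.IsClique (s : Set {v : α // T.IsLeaf v})) (ha : ∀ p ∈ s, T.Ancestor t p.1) :
    s.card ≤ Om T R S t :=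
  le_sup (by simp only [mem_filter, mem_powerset]; exact ⟨hsub, hcl, ha⟩)

lemma Om_spec {S : Finset {v : α // T.IsLeaf v}} {t : α} :
    ∃ s ⊆ S, R.IsClique (s : Set {v : α // T.IsLeaf v}) ∧ (∀ p ∈ s, T.Ancestor t p.1)
      ∧ s.card = Om T R S t := by
  have hne : (S.powerset.filter (fun (s : Finset {v : α // T.IsLeaf v}) =>
      R.IsClique (s : Set {v : α // T.IsLeaf v})
      ∧ ∀ p ∈ s, T.Ancestor t p.1)).Nonempty := by
    refine ⟨∅, ?_⟩
    simp only [mem_filter, mem_powerset]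
    exact ⟨empty_subset _, by simp, by simp⟩
  obtain ⟨s, hs, hcard⟩ := Finset.exists_mem_eq_sup _ hne Finset.card
  simp only [mem_filter, mem_powerset] at hs
  exact ⟨s, hs.1, hs.2.1, hs.2.2, hcard.symm⟩

lemma Om_mono {S : Finset {v : α // T.IsLeaf v}} {t t' : α} (h : T.Ancestor t' t) :
    Om T R S t ≤ Om T R S t' := by
  apply Finset.sup_mono
  intro s hs
  simp only [mem_filter, mem_powerset] at hs ⊢
  exact ⟨hs.1, hs.2.1, fun p hp => anc_trans h (hs.2.2 p hp)⟩

lemma Om_iter_mono {S : Finset {v : α // T.IsLeaf v}} {t : α} (n : ℕ) :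
    Om T R S t ≤ Om T R S (T.parent^[n] t) :=
  Om_mono ⟨n, rfl⟩

lemma Om_le {W : ℕ} {S : Finset {v : α // T.IsLeaf v}}
    (hS : ∀ s : Finset {v : α // T.IsLeaf v}, s ⊆ S →
      R.IsClique ((s : Finset {v : α // T.IsLeaf v}) : Set {v : α // T.IsLeaf v}) → s.card ≤ W) (t : α) :
    Om T R S t ≤ W := by
  apply Finset.sup_le
  intro s hs
  simp only [mem_filter, mem_powerset] at hs
  exact hS s hs.1 hs.2.1

lemma Om_leaf_le_one {S : Finset {v : α // T.IsLeaf v}} (v : {v : α // T.IsLeaf v}) :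
    Om T R S v.1 ≤ 1 := by
  apply Finset.sup_le
  intro s hs
  simp only [mem_filter, mem_powerset] at hs
  apply Finset.card_le_one.2
  intro a ha b hb
  have h1 := anc_of_leaf v.2 (hs.2.2 a ha)
  have h2 := anc_of_leaf v.2 (hs.2.2 b hb)
  exact Subtype.ext (h1.trans h2.symm)

lemma Om_leaf_pos {S : Finset {v : α // T.IsLeaf v}} {v : {v : α // T.IsLeaf v}}
    (hv : v ∈ S) : 1 ≤ Om T R S v.1 := by
  have : ({v} : Finset {v : α // T.IsLeaf v}).card ≤ Om T R S v.1 := by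
    apply le_Om (by simpa using hv) (by simp)
    intro p hp; simp at hp; subst hp; exact anc_refl _
  simpa using this

/-- modules are complete to each other -/
lemma adj_of_modules (hR : IsRealization T g R) {z a b : α} (hadj : (g z).Adj a b)
    (ha : T.IsChild a z) (hb : T.IsChild b z) {p q : {v : α // T.IsLeaf v}}
    (hp : T.Ancestor a p.1) (hq : T.Ancestor b q.1) : R.Adj p q :=
  (hR p q).2 ⟨z, a, b, lca_of_children ha hb hadj.ne hp hq, ha, hb, hp, hq, hadj⟩

/-- merge two cliques that are completely adjacent -/
lemma clique_merge {s t : Finset {v : α // T.IsLeaf v}}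
    (hs : R.IsClique (s : Set {v : α // T.IsLeaf v}))
    (ht : R.IsClique (t : Set {v : α // T.IsLeaf v}))
    (hst : ∀ p ∈ s, ∀ q ∈ t, R.Adj p q) :
    R.IsClique ((s ∪ t : Finset _) : Set {v : α // T.IsLeaf v})
      ∧ (s ∪ t).card = s.card + t.card := by
  constructor
  · intro p hp q hq hne
    simp only [coe_union, Set.mem_union, mem_coe] at hp hq
    rcases hp with hp | hp <;> rcases hq with hq | hq
    · exact hs hp hq hne
    · exact hst p hp q hq
    · exact (hst q hq p hp).symm
    · exact ht hp hq hne
  · rw [Finset.card_union_of_disjoint]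
    rw [Finset.disjoint_left]
    intro p hp hpt
    exact R.irrefl (hst p hp p hpt)


variable (T g R)

/-- `c` is a `D`-node: a maximal node whose subtree has (weighted) clique number at most `W/2`. -/
def Dd (S : Finset {v : α // T.IsLeaf v}) (W : ℕ) (c : α) : Prop :=
  1 ≤ Om T R S c ∧ Om T R S c ≤ W/2 ∧ W/2 < Om T R S (T.parent c)

/-- dyadic class of a node -/
noncomputable def jf (S : Finset {v : α // T.IsLeaf v}) (c : α) : ℕ := Nat.log 2 (Om T R S c)

variable {T g R}

lemma Dd_two_pow_le {S W} {c : α} (hc : Dd T R S W c) :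
    2 ^ (jf T R S c) ≤ Om T R S c := Nat.pow_log_le_self 2 (by have := hc.1; omega)

lemma Dd_lt_two_pow {S : Finset {v : α // T.IsLeaf v}} {c : α} :
    Om T R S c < 2 ^ (jf T R S c + 1) :=
  Nat.lt_pow_succ_log_self (by norm_num) _

lemma Dd_le_LL {S W} {c : α} (hc : Dd T R S W c) : Om T R S c ≤ LL W (jf T R S c) := by
  have h1 := Dd_lt_two_pow (T := T) (R := R) (S := S) (c := c)
  have h2 := hc.2.1
  simp only [LL, le_min_iff]
  omega

lemma exists_big {W : ℕ} {S : Finset {v : α // T.IsLeaf v}}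
    (hroot : W/2 < Om T R S T.root) (v : {v : α // T.IsLeaf v}) :
    ∃ n, W/2 < Om T R S (T.parent^[n] v.1) := by
  obtain ⟨m, hm⟩ := T.reaches_root v.1
  exact ⟨m, by rw [hm]; exact hroot⟩

variable (T g R) in
/-- the `D`-node above a leaf `v` -/
noncomputable def cv {W : ℕ} {S : Finset {v : α // T.IsLeaf v}}
    (hroot : W/2 < Om T R S T.root) (v : {v : α // T.IsLeaf v}) : α :=
  T.parent^[Nat.find (exists_big hroot v) - 1] v.1

lemma cv_spec {W : ℕ} {S : Finset {v : α // T.IsLeaf v}} (hW : 2 ≤ W)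
    (hroot : W/2 < Om T R S T.root) {v : {v : α // T.IsLeaf v}} (hv : v ∈ S) :
    Dd T R S W (cv T R hroot v) ∧ T.Ancestor (cv T R hroot v) v.1 := by
  have key : cv T R hroot v = T.parent^[Nat.find (exists_big hroot v) - 1] v.1 := rfl
  have hspec : W/2 < Om T R S (T.parent^[Nat.find (exists_big hroot v)] v.1) :=
    Nat.find_spec (exists_big hroot v)
  have hn0 : Nat.find (exists_big hroot v) ≠ 0 := by
    intro h0
    rw [h0] at hspec
    simp only [Function.iterate_zero, id] at hspec
    have := Om_leaf_le_one (T := T) (R := R) (S := S) v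
    omega
  have hmin : ¬ (W/2 < Om T R S (T.parent^[Nat.find (exists_big hroot v) - 1] v.1)) :=
    Nat.find_min (exists_big hroot v) (by omega)
  have hanc : T.Ancestor (cv T R hroot v) v.1 := ⟨_, key.symm⟩
  have hpar : T.parent (cv T R hroot v) = T.parent^[Nat.find (exists_big hroot v)] v.1 := by
    have h2 : Nat.find (exists_big hroot v) - 1 + 1 = Nat.find (exists_big hroot v) := by omega
    conv_rhs => rw [← h2, Function.iterate_succ_apply']
    rw [key]
  refine ⟨⟨?_, by rw [key]; omega, by rw [hpar]; exact hspec⟩, hanc⟩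
  calc 1 ≤ Om T R S v.1 := Om_leaf_pos hv
    _ ≤ Om T R S (cv T R hroot v) := by rw [key]; exact Om_iter_mono _

lemma cv_unique {W : ℕ} {S : Finset {v : α // T.IsLeaf v}} (hW : 2 ≤ W)
    (hroot : W/2 < Om T R S T.root) {v : {v : α // T.IsLeaf v}} (hv : v ∈ S)
    {c : α} (hc : Dd T R S W c) (hanc : T.Ancestor c v.1) : c = cv T R hroot v := by
  obtain ⟨hd, ha⟩ := cv_spec hW hroot hv
  rcases anc_total hanc ha with h | h
  · by_contra hne
    have h2 := anc_parent h hne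
    have h3 : Om T R S (T.parent (cv T R hroot v)) ≤ Om T R S c := Om_mono h2
    have := hd.2.2
    have := hc.2.1
    omega
  · by_contra hne
    have h2 := anc_parent h (fun hh => hne hh.symm)
    have h3 : Om T R S (T.parent c) ≤ Om T R S (cv T R hroot v) := Om_mono h2
    have := hc.2.2
    have := hd.2.1
    omega

/-- lifting cliques of class-j sibling modules to cliques of `R` -/
lemma lift_clique (hR : IsRealization T g R) {W : ℕ} {S : Finset {v : α // T.IsLeaf v}}
    (hS : ∀ s : Finset {v : α // T.IsLeaf v}, s ⊆ S →
      R.IsClique (s : Set {v : α // T.IsLeaf v}) → s.card ≤ W)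
    {z : α} {j : ℕ} (A : Finset α)
    (hA : ∀ a ∈ A, Dd T R S W a ∧ T.IsChild a z ∧ jf T R S a = j)
    (hadj : (A : Set α).Pairwise (g z).Adj) : A.card * 2^j ≤ W := by
  have hK : ∀ a : α, ∃ s, s ⊆ S ∧ R.IsClique (s : Set {v : α // T.IsLeaf v})
      ∧ (∀ p ∈ s, T.Ancestor a p.1) ∧ s.card = Om T R S a := fun a => Om_spec
  choose K hK1 hK2 hK3 hK4 using hK
  have hdisj : ∀ a ∈ A, ∀ b ∈ A, a ≠ b → Disjoint (K a) (K b) := by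
    intro a ha b hb hne
    rw [Finset.disjoint_left]
    intro p hpa hpb
    exact subtree_disj (hA a ha).2.1 (hA b hb).2.1 hne (hK3 a p hpa) (hK3 b p hpb)
  have hcl : R.IsClique ((A.biUnion K : Finset _) : Set {v : α // T.IsLeaf v}) := by
    intro p hp q hq hne
    simp only [coe_biUnion, Set.mem_iUnion, mem_coe] at hp hq
    obtain ⟨a, ha, hpa⟩ := hp
    obtain ⟨b, hb, hqb⟩ := hq
    by_cases hab : a = b
    · subst hab; exact hK2 a hpa hqb hne
    · exact adj_of_modules hR (hadj ha hb hab) (hA a ha).2.1 (hA b hb).2.1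
        (hK3 a p hpa) (hK3 b q hqb)
  have hsub : A.biUnion K ⊆ S := by
    intro p hp
    simp only [mem_biUnion] at hp
    obtain ⟨a, ha, hpa⟩ := hp
    exact hK1 a hpa
  have hcard : (A.biUnion K).card = ∑ a ∈ A, (K a).card := Finset.card_biUnion hdisj
  have hlow : A.card * 2^j ≤ ∑ a ∈ A, (K a).card := by
    rw [Finset.card_eq_sum_ones, Finset.sum_mul, one_mul]
    apply Finset.sum_le_sum
    intro a ha
    rw [hK4]
    rw [← (hA a ha).2.2]
    exact Dd_two_pow_le (hA a ha).1
  calc A.card * 2^j ≤ (A.biUnion K).card := by omega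
    _ ≤ W := hS _ hsub hcl

lemma exists_kappa {k : ℕ}
    {C : ∀ β : Type u, SimpleGraph β → Prop}
    (hhered : ∀ (β : Type u) (G : SimpleGraph β) (s : Set β), C β G → C s (G.induce s))
    (hchi : ∀ (β : Type u) [Fintype β] (H : SimpleGraph β), C β H →
      H.Colorable (H.cliqueNum ^ k))
    (hmem : ∀ x : α, ¬ T.IsLeaf x →
      C {y : α // T.IsChild y x} ((g x).induce {y : α | T.IsChild y x}))
    (hR : IsRealization T g R) {W : ℕ} {S : Finset {v : α // T.IsLeaf v}}
    (hS : ∀ s : Finset {v : α // T.IsLeaf v}, s ⊆ S →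
      R.IsClique (s : Set {v : α // T.IsLeaf v}) → s.card ≤ W)
    (z : α) (j : ℕ) :
    ∃ κ : α → ℕ,
      (∀ a, Dd T R S W a → T.IsChild a z → jf T R S a = j → κ a < KK k W j) ∧
      (∀ a b, Dd T R S W a → Dd T R S W b → T.IsChild a z → T.IsChild b z →
        jf T R S a = j → jf T R S b = j → (g z).Adj a b → κ a ≠ κ b) := by
  by_cases hch : ∃ y, T.IsChild y z
  case neg =>
    exact ⟨fun _ => 0, fun a _ haz _ => absurd ⟨a, haz⟩ hch,
      fun a b _ _ haz _ _ _ _ => absurd ⟨a, haz⟩ hch⟩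
  case pos =>
    have hnl : ¬ T.IsLeaf z := fun hl => hch.elim (fun y hy => hl y hy)
    have hC0 := hmem z hnl
    set s : Set {y : α // T.IsChild y z} :=
      {a : {y : α // T.IsChild y z} | Dd T R S W a.1 ∧ jf T R S a.1 = j} with hs
    have hC := hhered _ _ s hC0
    have hcol := hchi _ _ hC
    set H := ((g z).induce {y : α | T.IsChild y z}).induce s with hH
    have hAdj : ∀ x y : s, H.Adj x y ↔ (g z).Adj x.1.1 y.1.1 := fun x y => Iff.rfl
    have hbound : H.cliqueNum ≤ W / 2^j := by
      obtain ⟨t, ht⟩ := H.exists_isNClique_cliqueNum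
      have hinj : Function.Injective (fun (a : s) => a.1.1) := by
        intro a b hab
        exact Subtype.ext (Subtype.ext hab)
      set A : Finset α := t.map ⟨fun (a : s) => a.1.1, hinj⟩ with hA
      have hAmem : ∀ a ∈ A, Dd T R S W a ∧ T.IsChild a z ∧ jf T R S a = j := by
        intro a ha
        simp only [hA, mem_map, Function.Embedding.coeFn_mk] at ha
        obtain ⟨x, hx, rfl⟩ := ha
        exact ⟨x.2.1, x.1.2, x.2.2⟩
      have hApair : (A : Set α).Pairwise (g z).Adj := by
        intro p hp q hq hne
        simp only [hA, coe_map, Set.mem_image, Function.Embedding.coeFn_mk, mem_coe] at hp hq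
        obtain ⟨x, hx, rfl⟩ := hp
        obtain ⟨y, hy, rfl⟩ := hq
        have hxy : x ≠ y := fun hh => hne (by rw [hh])
        exact (hAdj x y).1 (ht.isClique hx hy hxy)
      have hlift := lift_clique hR hS A hAmem hApair
      have hcard : A.card = H.cliqueNum := by rw [hA, Finset.card_map, ht.card_eq]
      rw [Nat.le_div_iff_mul_le (pow_pos (by norm_num : (0:ℕ) < 2) j)]
      rw [← hcard]
      exact hlift
    have hcol2 : H.Colorable (KK k W j) :=
      hcol.mono (Nat.pow_le_pow_left hbound k)
    set CC := hcol2.some with hCC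
    refine ⟨fun a => if h : T.IsChild a z ∧ Dd T R S W a ∧ jf T R S a = j then
      (CC ⟨⟨a, h.1⟩, ⟨h.2.1, h.2.2⟩⟩).val else 0, ?_, ?_⟩
    · intro a hd hc hj
      beta_reduce
      rw [dif_pos ⟨hc, hd, hj⟩]
      exact (CC _).isLt
    · intro a b hda hdb haz hbz hja hjb hadj
      beta_reduce
      rw [dif_pos ⟨haz, hda, hja⟩, dif_pos ⟨hbz, hdb, hjb⟩]
      intro hval
      have : CC ⟨⟨a, haz⟩, ⟨hda, hja⟩⟩ ≠ CC ⟨⟨b, hbz⟩, ⟨hdb, hjb⟩⟩ :=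
        CC.valid ((hAdj _ _).2 hadj)
      exact this (Fin.ext hval)

variable (T g R) in
/-- the exclusion function along thick paths -/
noncomputable def dl (S : Finset {v : α // T.IsLeaf v}) (W k : ℕ) (j : ℕ) (z x : α) : ℕ :=
  ((univ : Finset α).filter (fun a => Dd T R S W a ∧ T.IsChild a z ∧ jf T R S a = j
    ∧ (g z).Adj a x)).sup (fun a => (Om T R S a)^(2*k+3))

variable (T g R) in
noncomputable def ee (S : Finset {v : α // T.IsLeaf v}) (W k j : ℕ) (t : α) : ℕ :=
  ∑ i ∈ range (T.depth t), dl T g R S W k j (T.parent^[i+1] t) (T.parent^[i] t)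

lemma le_dl {S : Finset {v : α // T.IsLeaf v}} {W k j : ℕ} {z x a : α}
    (h1 : Dd T R S W a) (h2 : T.IsChild a z) (h3 : jf T R S a = j) (h4 : (g z).Adj a x) :
    (Om T R S a)^(2*k+3) ≤ dl T g R S W k j z x := by
  unfold dl
  exact le_sup (f := fun a => (Om T R S a)^(2*k+3))
    (by simp only [mem_filter, mem_univ, true_and]; exact ⟨h1, h2, h3, h4⟩)

lemma depth_root : T.depth T.root = 0 :=
  Nat.eq_zero_of_le_zero (Nat.find_le rfl)

lemma ee_root {S : Finset {v : α // T.IsLeaf v}} {W k j : ℕ} :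
    ee T g R S W k j T.root = 0 := by
  rw [ee, depth_root]
  simp

lemma ee_rec {S : Finset {v : α // T.IsLeaf v}} {W k j : ℕ} {t : α} (ht : t ≠ T.root) :
    ee T g R S W k j t = dl T g R S W k j (T.parent t) t + ee T g R S W k j (T.parent t) := by
  rw [ee, ee, depth_parent T ht, Finset.sum_range_succ']
  simp only [Function.iterate_succ_apply, Function.iterate_zero_apply]
  rw [add_comm]

lemma ee_mono {S : Finset {v : α // T.IsLeaf v}} {W k j : ℕ} {a t : α}
    (h : T.Ancestor a t) : ee T g R S W k j a ≤ ee T g R S W k j t := by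
  have key : ∀ (n : ℕ) (t : α), T.depth t ≤ n → ∀ a, T.Ancestor a t →
      ee T g R S W k j a ≤ ee T g R S W k j t := by
    intro n
    induction n with
    | zero =>
      intro t ht a ha
      have : t = T.root := depth_eq_zero T (by omega)
      subst this
      rw [anc_of_root ha]
    | succ n ih =>
      intro t ht a ha
      by_cases hat : a = t
      · subst hat; exact le_refl _
      by_cases htr : t = T.root
      · subst htr; rw [anc_of_root ha]
      calc ee T g R S W k j a ≤ ee T g R S W k j (T.parent t) := by
            apply ih (T.parent t) ?_ a (anc_parent ha hat)
            rw [depth_parent T htr] at ht; omega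
        _ ≤ _ := by rw [ee_rec htr]; omega
  exact key (T.depth t) t le_rfl a h

lemma feas_aux (hR : IsRealization T g R) {S : Finset {v : α // T.IsLeaf v}} {W k j : ℕ} :
    ∀ (n : ℕ) (t : α), T.depth t ≤ n → ∃ K : Finset {v : α // T.IsLeaf v}, K ⊆ S ∧
      R.IsClique (K : Set {v : α // T.IsLeaf v}) ∧
      (∀ p ∈ K, ∀ q : {v : α // T.IsLeaf v}, T.Ancestor t q.1 → R.Adj p q) ∧
      ee T g R S W k j t ≤ (LL W j)^(2*k+2) * K.card := by
  intro n
  induction n with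
  | zero =>
    intro t ht
    have hroot : t = T.root := depth_eq_zero T (by omega)
    subst hroot
    exact ⟨∅, by simp, by simp, by simp, by rw [ee_root]; exact Nat.zero_le _⟩
  | succ n ih =>
    intro t ht
    by_cases htr : t = T.root
    · subst htr
      exact ⟨∅, by simp, by simp, by simp, by rw [ee_root]; exact Nat.zero_le _⟩
    obtain ⟨K', h1, h2, h3, h4⟩ := ih (T.parent t) (by rw [depth_parent T htr] at ht; omega)
    by_cases hd0 : dl T g R S W k j (T.parent t) t = 0
    · refine ⟨K', h1, h2, ?_, ?_⟩
      · intro p hp q hq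
        exact h3 p hp q (anc_trans (parent_anc t) hq)
      · rw [ee_rec htr, hd0, Nat.zero_add]; exact h4
    · have hne : ((univ : Finset α).filter (fun a => Dd T R S W a ∧ T.IsChild a (T.parent t)
          ∧ jf T R S a = j ∧ (g (T.parent t)).Adj a t)).Nonempty := by
        by_contra hemp
        rw [Finset.not_nonempty_iff_eq_empty] at hemp
        apply hd0
        rw [dl, hemp]
        simp
      obtain ⟨a, ha, hsup⟩ := Finset.exists_mem_eq_sup _ hne
        (fun a => (Om T R S a)^(2*k+3))
      simp only [mem_filter, mem_univ, true_and] at ha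
      obtain ⟨hda, hcha, hjfa, hadja⟩ := ha
      obtain ⟨Ka, hKa1, hKa2, hKa3, hKa4⟩ := Om_spec (T := T) (R := R) (S := S) (t := a)
      have hcht : T.IsChild t (T.parent t) :=
        ⟨rfl, fun hh => htr (parent_fix_root hh.symm)⟩
      have hcross : ∀ p ∈ K', ∀ q ∈ Ka, R.Adj p q := fun p hp q hq =>
        h3 p hp q (anc_trans (child_anc hcha) (hKa3 q hq))
      obtain ⟨hclK, hcardK⟩ := clique_merge h2 hKa2 hcross
      refine ⟨K' ∪ Ka, union_subset h1 hKa1, hclK, ?_, ?_⟩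
      · intro p hp q hq
        rcases mem_union.1 hp with hp | hp
        · exact h3 p hp q (anc_trans (parent_anc t) hq)
        · exact adj_of_modules hR hadja hcha hcht (hKa3 p hp) hq
      · have hOmLL : Om T R S a ≤ LL W j := by
          have := Dd_le_LL hda
          rwa [hjfa] at this
        have hb1 : dl T g R S W k j (T.parent t) t ≤ (LL W j)^(2*k+2) * Ka.card := by
          rw [dl, hsup, hKa4]
          calc (Om T R S a)^(2*k+3) = (Om T R S a)^(2*k+2) * Om T R S a := by
                rw [← pow_succ]
            _ ≤ (LL W j)^(2*k+2) * Om T R S a :=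
                Nat.mul_le_mul_right _ (Nat.pow_le_pow_left hOmLL _)
        rw [ee_rec htr, hcardK, Nat.mul_add]
        omega

lemma feas (hR : IsRealization T g R) {S : Finset {v : α // T.IsLeaf v}} {W k : ℕ}
    (hS : ∀ s : Finset {v : α // T.IsLeaf v}, s ⊆ S →
      R.IsClique (s : Set {v : α // T.IsLeaf v}) → s.card ≤ W)
    {c : α} (hc : Dd T R S W c) :
    ee T g R S W k (jf T R S c) (T.parent c) + (Om T R S c)^(2*k+3)
      ≤ MM k W (jf T R S c) := by
  obtain ⟨K, h1, h2, h3, h4⟩ := feas_aux hR (T.depth (T.parent c)) (T.parent c) le_rfl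
  obtain ⟨Kc, hKc1, hKc2, hKc3, hKc4⟩ := Om_spec (T := T) (R := R) (S := S) (t := c)
  have hcross : ∀ p ∈ K, ∀ q ∈ Kc, R.Adj p q := fun p hp q hq =>
    h3 p hp q (anc_trans (parent_anc c) (hKc3 q hq))
  obtain ⟨hcl, hcard⟩ := clique_merge h2 hKc2 hcross
  have hWb := hS _ (union_subset h1 hKc1) hcl
  rw [hcard] at hWb
  have hOmLL : Om T R S c ≤ LL W (jf T R S c) := Dd_le_LL hc
  have h5 : (Om T R S c)^(2*k+3) ≤ (LL W (jf T R S c))^(2*k+2) * Om T R S c := by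
    calc (Om T R S c)^(2*k+3) = (Om T R S c)^(2*k+2) * Om T R S c := by rw [← pow_succ]
      _ ≤ _ := Nat.mul_le_mul_right _ (Nat.pow_le_pow_left hOmLL _)
  calc ee T g R S W k (jf T R S c) (T.parent c) + (Om T R S c)^(2*k+3)
      ≤ (LL W (jf T R S c))^(2*k+2) * K.card
        + (LL W (jf T R S c))^(2*k+2) * Om T R S c := add_le_add h4 h5
    _ = (LL W (jf T R S c))^(2*k+2) * (K.card + Om T R S c) := by rw [Nat.mul_add]
    _ ≤ (LL W (jf T R S c))^(2*k+2) * W := by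
        apply Nat.mul_le_mul_left
        omega
    _ = MM k W (jf T R S c) := rfl

lemma main_lemma (k : ℕ)
    (C : ∀ β : Type u, SimpleGraph β → Prop)
    (hhered : ∀ (β : Type u) (G : SimpleGraph β) (s : Set β), C β G → C s (G.induce s))
    (hchi : ∀ (β : Type u) [Fintype β] (H : SimpleGraph β), C β H →
      H.Colorable (H.cliqueNum ^ k))
    (hmem : ∀ x : α, ¬ T.IsLeaf x →
      C {y : α // T.IsChild y x} ((g x).induce {y : α | T.IsChild y x}))
    (hR : IsRealization T g R) :
    ∀ (W : ℕ) (S : Finset {v : α // T.IsLeaf v}),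
      (∀ s : Finset {v : α // T.IsLeaf v}, s ⊆ S →
        R.IsClique (s : Set {v : α // T.IsLeaf v}) → s.card ≤ W) →
      ∃ f : {v : α // T.IsLeaf v} → ℕ,
        (∀ v ∈ S, f v < W^(2*k+3)) ∧
        (∀ u v, u ∈ S → v ∈ S → R.Adj u v → f u ≠ f v) := by
  intro W
  induction W using Nat.strong_induction_on with
  | _ W ih =>
  intro S hS
  by_cases hW2 : W < 2
  · refine ⟨fun _ => 0, ?_, ?_⟩
    · intro v hv
      have h1 : ({v} : Finset {v : α // T.IsLeaf v}).card ≤ W :=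
        hS {v} (by simpa using hv) (by simp)
      simp only [card_singleton] at h1
      exact pow_pos (by omega) _
    · intro u v hu hv hadj
      have h2 : ({u, v} : Finset {v : α // T.IsLeaf v}).card ≤ W := by
        apply hS
        · intro p hp
          rcases mem_insert.1 hp with rfl | hp
          · exact hu
          · rw [mem_singleton.1 hp]; exact hv
        · intro p hp q hq hne
          simp only [coe_insert, coe_singleton, Set.mem_insert_iff, Set.mem_singleton_iff]
            at hp hq
          rcases hp with rfl | rfl <;> rcases hq with rfl | rfl
          · exact absurd rfl hne
          · exact hadj
          · exact hadj.symm
          · exact absurd rfl hne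
      rw [Finset.card_pair hadj.ne] at h2
      omega
  · push_neg at hW2
    by_cases hroot : W/2 < Om T R S T.root
    case neg =>
      push_neg at hroot
      obtain ⟨f, hf1, hf2⟩ := ih (W/2) (by omega) S
        (fun s hs hc => le_trans (le_Om hs hc (fun p _ => anc_root p.1)) hroot)
      refine ⟨f, fun v hv => lt_of_lt_of_le (hf1 v hv) ?_, hf2⟩
      exact Nat.pow_le_pow_left (by omega) _
    case pos =>
    -- the κ colorings of sibling classes
    have hkap := fun z j => exists_kappa hhered hchi hmem hR hS z j
    choose κ hκ1 hκ2 using hkap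
    -- recursive colorings of the D-modules
    have hmod : ∀ c : α, ∃ fc : {v : α // T.IsLeaf v} → ℕ,
        Dd T R S W c →
        (∀ v, v ∈ S → T.Ancestor c v.1 → fc v < (Om T R S c)^(2*k+3)) ∧
        (∀ u v, u ∈ S → v ∈ S → T.Ancestor c u.1 → T.Ancestor c v.1 → R.Adj u v →
          fc u ≠ fc v) := by
      intro c
      by_cases hc : Dd T R S W c
      · obtain ⟨fc, hfc1, hfc2⟩ := ih (Om T R S c) (by have := hc.2.1; omega)
          (S.filter (fun v => T.Ancestor c v.1))
          (by intro s hs hcl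
              exact le_Om (fun p hp => (mem_filter.1 (hs hp)).1) hcl
                (fun p hp => (mem_filter.1 (hs hp)).2))
        refine ⟨fc, fun _ => ⟨?_, ?_⟩⟩
        · intro v hv hanc
          exact hfc1 v (mem_filter.2 ⟨hv, hanc⟩)
        · intro u v hu hv hau hav hadj
          exact hfc2 u v (mem_filter.2 ⟨hu, hau⟩) (mem_filter.2 ⟨hv, hav⟩) hadj
      · exact ⟨fun _ => 0, fun h => absurd h hc⟩
    choose F hF using hmod
    -- the coloring
    set fval : {v : α // T.IsLeaf v} → ℕ := fun v =>
      off k W (jf T R S (cv T R hroot v))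
      + κ (T.parent (cv T R hroot v)) (jf T R S (cv T R hroot v)) (cv T R hroot v)
        * MM k W (jf T R S (cv T R hroot v))
      + (ee T g R S W k (jf T R S (cv T R hroot v)) (T.parent (cv T R hroot v))
         + F (cv T R hroot v) v) with hfval
    -- basic facts for v ∈ S
    have hDcv : ∀ v : {v : α // T.IsLeaf v}, v ∈ S → Dd T R S W (cv T R hroot v) :=
      fun v hv => (cv_spec hW2 hroot hv).1
    have hAcv : ∀ v : {v : α // T.IsLeaf v}, v ∈ S → T.Ancestor (cv T R hroot v) v.1 :=
      fun v hv => (cv_spec hW2 hroot hv).2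
    have hchild : ∀ v : {v : α // T.IsLeaf v}, v ∈ S →
        T.IsChild (cv T R hroot v) (T.parent (cv T R hroot v)) := by
      intro v hv
      refine ⟨rfl, fun hh => ?_⟩
      have hd := hDcv v hv
      have h1 := hd.2.1
      have h2 := hd.2.2
      rw [← hh] at h2
      omega
    have hrem : ∀ v : {v : α // T.IsLeaf v}, v ∈ S →
        ee T g R S W k (jf T R S (cv T R hroot v)) (T.parent (cv T R hroot v))
          + F (cv T R hroot v) v < MM k W (jf T R S (cv T R hroot v)) := by
      intro v hv
      have h1 := feas (k := k) hR hS (hDcv v hv)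
      have h2 := (hF _ (hDcv v hv)).1 v hv (hAcv v hv)
      omega
    have hκlt : ∀ v : {v : α // T.IsLeaf v}, v ∈ S →
        κ (T.parent (cv T R hroot v)) (jf T R S (cv T R hroot v)) (cv T R hroot v)
          < KK k W (jf T R S (cv T R hroot v)) :=
      fun v hv => hκ1 _ _ _ (hDcv v hv) (hchild v hv) rfl
    have hrange : ∀ v : {v : α // T.IsLeaf v}, v ∈ S →
        off k W (jf T R S (cv T R hroot v)) ≤ fval v ∧
        fval v < off k W (jf T R S (cv T R hroot v))
          + KK k W (jf T R S (cv T R hroot v)) * MM k W (jf T R S (cv T R hroot v)) := by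
      intro v hv
      constructor
      · simp only [hfval]; omega
      · have h1 := hrem v hv
        have h2 := hκlt v hv
        have h3 : (κ (T.parent (cv T R hroot v)) (jf T R S (cv T R hroot v))
              (cv T R hroot v) + 1) * MM k W (jf T R S (cv T R hroot v))
            ≤ KK k W (jf T R S (cv T R hroot v)) * MM k W (jf T R S (cv T R hroot v)) :=
          Nat.mul_le_mul_right _ (by omega)
        simp only [hfval]
        rw [Nat.add_mul, Nat.one_mul] at h3
        omega
    have hjsmall : ∀ v : {v : α // T.IsLeaf v}, v ∈ S →
        2 ^ (jf T R S (cv T R hroot v)) ≤ W / 2 := by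
      intro v hv
      have h1 := Dd_two_pow_le (hDcv v hv)
      have h2 := (hDcv v hv).2.1
      omega
    refine ⟨fval, ?_, ?_⟩
    · intro v hv
      have h1 := (hrange v hv).2
      have h2 := off_block_le (k := k) (hjsmall v hv)
      omega
    · -- properness
      have hblock : ∀ u v : {v : α // T.IsLeaf v}, u ∈ S → v ∈ S →
          jf T R S (cv T R hroot u) < jf T R S (cv T R hroot v) → fval u ≠ fval v := by
        intro u v hu hv hlt
        have h1 := (hrange u hu).2
        have h2 := (hrange v hv).1
        have h3 := off_lt_le (k := k) (W := W) hlt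
        omega
      -- the key asymmetric case: x' = cv u, y' a strict ancestor of cv v
      have key : ∀ u v : {v : α // T.IsLeaf v}, u ∈ S → v ∈ S →
          jf T R S (cv T R hroot u) = jf T R S (cv T R hroot v) →
          ∀ z y', T.IsChild (cv T R hroot u) z → T.IsChild y' z →
          (g z).Adj (cv T R hroot u) y' → T.Ancestor y' (cv T R hroot v) →
          y' ≠ cv T R hroot v → fval u ≠ fval v := by
        intro u v hu hv hjeq z y' hxc hyc hgadj hyanc hyne
        have hy'root : y' ≠ T.root := child_ne_root T hyc
        have hrec := ee_rec (T := T) (g := g) (R := R) (S := S) (W := W) (k := k)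
          (j := jf T R S (cv T R hroot u)) hy'root
        rw [hyc.1] at hrec
        have hdl : (Om T R S (cv T R hroot u))^(2*k+3)
            ≤ dl T g R S W k (jf T R S (cv T R hroot u)) z y' :=
          le_dl (hDcv u hu) hxc rfl hgadj
        have h1 : ee T g R S W k (jf T R S (cv T R hroot u)) z
            + (Om T R S (cv T R hroot u))^(2*k+3)
            ≤ ee T g R S W k (jf T R S (cv T R hroot u)) y' := by omega
        have h2 : ee T g R S W k (jf T R S (cv T R hroot u)) y'
            ≤ ee T g R S W k (jf T R S (cv T R hroot u)) (T.parent (cv T R hroot v)) :=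
          ee_mono (anc_parent hyanc hyne)
        have hFu : F (cv T R hroot u) u < (Om T R S (cv T R hroot u))^(2*k+3) :=
          (hF _ (hDcv u hu)).1 u hu (hAcv u hu)
        have hzu : T.parent (cv T R hroot u) = z := hxc.1
        have hru := hrem u hu
        have hrv := hrem v hv
        -- compare remainders
        have hlt : ee T g R S W k (jf T R S (cv T R hroot u)) (T.parent (cv T R hroot u))
              + F (cv T R hroot u) u
            < ee T g R S W k (jf T R S (cv T R hroot v)) (T.parent (cv T R hroot v))
              + F (cv T R hroot v) v := by
          rw [hzu, ← hjeq]
          omega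
        intro heqv
        simp only [hfval] at heqv
        rw [hjeq] at heqv hru hlt
        have hne2 := digit_inj
          (a := κ (T.parent (cv T R hroot u)) (jf T R S (cv T R hroot v)) (cv T R hroot u))
          (b := κ (T.parent (cv T R hroot v)) (jf T R S (cv T R hroot v)) (cv T R hroot v))
          hru hrv (Or.inr (Nat.ne_of_lt hlt))
        apply hne2
        omega
      intro u v hu hv hadj
      by_cases hcc : cv T R hroot u = cv T R hroot v
      · -- same module
        intro heqv
        have hne := (hF _ (hDcv u hu)).2 u v hu hv (hAcv u hu) (hcc ▸ hAcv v hv) hadj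
        apply hne
        rw [hcc]
        simp only [hfval, hcc] at heqv
        omega
      · obtain ⟨z, x', y', hlca, hxc, hyc, hxu, hyv, hgadj⟩ := (hR u v).1 hadj
        -- classify x'
        have hclassx : x' = cv T R hroot u ∨
            (T.Ancestor x' (cv T R hroot u) ∧ x' ≠ cv T R hroot u) := by
          rcases anc_total hxu (hAcv u hu) with h | h
          · by_cases hh : x' = cv T R hroot u
            · exact Or.inl hh
            · exact Or.inr ⟨h, hh⟩
          · by_cases hh : cv T R hroot u = x'
            · exact Or.inl hh.symm
            · exfalso
              have h2 := anc_parent h hh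
              rw [hxc.1] at h2
              have h3 : T.Ancestor (cv T R hroot u) v.1 := anc_trans h2 hlca.2.1
              exact hcc (cv_unique hW2 hroot hv (hDcv u hu) h3)
        have hclassy : y' = cv T R hroot v ∨
            (T.Ancestor y' (cv T R hroot v) ∧ y' ≠ cv T R hroot v) := by
          rcases anc_total hyv (hAcv v hv) with h | h
          · by_cases hh : y' = cv T R hroot v
            · exact Or.inl hh
            · exact Or.inr ⟨h, hh⟩
          · by_cases hh : cv T R hroot v = y'
            · exact Or.inl hh.symm
            · exfalso
              have h2 := anc_parent h hh
              rw [hyc.1] at h2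
              have h3 : T.Ancestor (cv T R hroot v) u.1 := anc_trans h2 hlca.1
              exact hcc (cv_unique hW2 hroot hu (hDcv v hv) h3).symm
        have hthick : ∀ w, T.Ancestor w (cv T R hroot u) ∨ T.Ancestor w (cv T R hroot v) →
            (w ≠ cv T R hroot u ∧ w ≠ cv T R hroot v) →
            True := fun _ _ _ => trivial
        -- rule out both-strict case
        rcases hclassx with hx | hx <;> rcases hclassy with hy | hy
        · -- siblings
          rcases lt_trichotomy (jf T R S (cv T R hroot u)) (jf T R S (cv T R hroot v))
            with hj | hj | hj
          · exact hblock u v hu hv hj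
          · -- same class: κ distinguishes
            have hzu : T.parent (cv T R hroot u) = z := by rw [← hx]; exact hxc.1
            have hzv : T.parent (cv T R hroot v) = z := by rw [← hy]; exact hyc.1
            have hκne := hκ2 z (jf T R S (cv T R hroot u)) _ _ (hDcv u hu) (hDcv v hv)
              (hx ▸ hxc) (hy ▸ hyc) rfl hj.symm (hx ▸ hy ▸ hgadj)
            have hru := hrem u hu
            have hrv := hrem v hv
            rw [hj] at hru
            have hκne' : κ (T.parent (cv T R hroot u)) (jf T R S (cv T R hroot v))
                  (cv T R hroot u)
                ≠ κ (T.parent (cv T R hroot v)) (jf T R S (cv T R hroot v))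
                  (cv T R hroot v) := by
              rw [hzu, hzv, ← hj]; exact hκne
            intro heqv
            simp only [hfval] at heqv
            rw [hj] at heqv
            have hne2 := digit_inj hru hrv (Or.inl hκne')
            apply hne2
            omega
          · exact fun h => hblock v u hv hu hj h.symm
        · -- x' = cv u, y' strict
          rcases lt_trichotomy (jf T R S (cv T R hroot u)) (jf T R S (cv T R hroot v))
            with hj | hj | hj
          · exact hblock u v hu hv hj
          · exact key u v hu hv hj z y' (hx ▸ hxc) hyc (hx ▸ hgadj) hy.1 hy.2
          · exact fun h => hblock v u hv hu hj h.symm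
        · -- y' = cv v, x' strict
          rcases lt_trichotomy (jf T R S (cv T R hroot u)) (jf T R S (cv T R hroot v))
            with hj | hj | hj
          · exact hblock u v hu hv hj
          · exact fun h => key v u hv hu hj.symm z x' (hy ▸ hyc) hxc
              (hy ▸ hgadj.symm) hx.1 hx.2 h.symm
          · exact fun h => hblock v u hv hu hj h.symm
        · -- both strict: contradiction with clique number
          exfalso
          have hOx : W/2 < Om T R S x' := by
            have h2 := anc_parent hx.1 hx.2
            have h3 : Om T R S (T.parent (cv T R hroot u)) ≤ Om T R S x' := Om_mono h2
            have := (hDcv u hu).2.2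
            omega
          have hOy : W/2 < Om T R S y' := by
            have h2 := anc_parent hy.1 hy.2
            have h3 : Om T R S (T.parent (cv T R hroot v)) ≤ Om T R S y' := Om_mono h2
            have := (hDcv v hv).2.2
            omega
          obtain ⟨Kx, hKx1, hKx2, hKx3, hKx4⟩ := Om_spec (T := T) (R := R) (S := S) (t := x')
          obtain ⟨Ky, hKy1, hKy2, hKy3, hKy4⟩ := Om_spec (T := T) (R := R) (S := S) (t := y')
          have hcross : ∀ p ∈ Kx, ∀ q ∈ Ky, R.Adj p q := fun p hp q hq =>
            adj_of_modules hR hgadj hxc hyc (hKx3 p hp) (hKy3 q hq)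
          obtain ⟨hcl, hcard⟩ := clique_merge hKx2 hKy2 hcross
          have hWb := hS _ (union_subset hKx1 hKy1) hcl
          rw [hcard, hKx4, hKy4] at hWb
          omega

end Main


/-- If `C` is a hereditary (isomorphism-invariant and closed under induced
subgraphs) class with χ-bounding function `ω^k` (`k ≥ 1`), then its
substitution closure `C_s` — the class of realizations of
`C`-tree-decompositions — is polynomially χ-bounded with function `ω^(2k+3)`. -/
theorem substitution_closure_poly_chi_bounded {α : Type u} [Fintype α]
    (k : ℕ) (hk : 1 ≤ k)
    (C : ∀ β : Type u, SimpleGraph β → Prop)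
    (hiso : ∀ (β γ : Type u) (G : SimpleGraph β) (H : SimpleGraph γ),
      G ≃g H → C β G → C γ H)
    (hhered : ∀ (β : Type u) (G : SimpleGraph β) (s : Set β),
      C β G → C s (G.induce s))
    (hchi : ∀ (β : Type u) [Fintype β] (H : SimpleGraph β), C β H →
      H.Colorable (H.cliqueNum ^ k))
    (T : ParentTree α) (g : α → SimpleGraph α)
    (hsupp : ∀ x y z, (g x).Adj y z → T.IsChild y x ∧ T.IsChild z x)
    (hmem : ∀ x : α, ¬ T.IsLeaf x →
      C {y : α // T.IsChild y x} ((g x).induce {y : α | T.IsChild y x}))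
    (R : SimpleGraph {v : α // T.IsLeaf v}) (hR : IsRealization T g R) :
    R.Colorable (R.cliqueNum ^ (2 * k + 3)) := by
  classical
  obtain ⟨f, hf1, hf2⟩ := main_lemma k C hhered hchi hmem hR R.cliqueNum
    (Finset.univ : Finset {v : α // T.IsLeaf v})
    (fun s _ hc => SimpleGraph.IsClique.card_le_cliqueNum (tc := hc))
  exact ⟨SimpleGraph.Coloring.mk (fun v => ⟨f v, hf1 v (Finset.mem_univ v)⟩)
    (fun hadj heq => hf2 _ _ (Finset.mem_univ _) (Finset.mem_univ _) hadj
      (congrArg Fin.val heq))⟩
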